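/- There exist polynomials x_w, y_w ∈ ℂ[x_1,…,x_n] indexed by w ∈ S_n such that the identity operator on ℂ[x_1,…,x_n] decomposes as id = Σ_{w∈S_n} M_{x_w} ∘ ∂_{w_0} ∘ M_{y_w}, where M_g denotes multiplication by g and ∂_{w_0} is the longest divided difference operator. -/
import Mathlib


open MvPolynomial

/-- The Vandermonde determinant `Δ = ∏_{i<j} (xᵢ - xⱼ)`. -/
noncomputable def vandermonde' (n : ℕ) : MvPolynomial (Fin n) ℂ :=
  ∏ p ∈ Finset.univ.filter (fun p : Fin n × Fin n => p.1 < p.2), (X p.1 - X p.2)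

namespace NilHeckeAux

variable {n : ℕ}

/-- The "two-variable" Cauchy-type kernel `∏_{i<j} (xᵢ - yⱼ)`, viewed as a polynomial
in the `y`-variables with coefficients in `ℂ[x]`. -/
noncomputable def CC (n : ℕ) : MvPolynomial (Fin n) (MvPolynomial (Fin n) ℂ) :=
  ∏ p ∈ Finset.univ.filter (fun p : Fin n × Fin n => p.1 < p.2),
    (C (X p.1) - X p.2)

lemma exists_lt_of_ne_one {u : Equiv.Perm (Fin n)} (hu : u ≠ 1) : ∃ j, u j < j := by
  by_contra h
  push_neg at h
  apply hu
  have hsum : ∑ j : Fin n, ((u j : ℕ)) = ∑ j : Fin n, (j : ℕ) :=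
    Equiv.sum_comp u (fun j => (j : ℕ))
  have := (Finset.sum_eq_sum_iff_of_le (s := Finset.univ)
    (f := fun j : Fin n => (j : ℕ)) (g := fun j => (u j : ℕ))
    (fun i _ => by exact_mod_cast h i)).mp hsum.symm
  ext j
  exact ((this j (Finset.mem_univ j)).symm : ((u j : ℕ)) = j)

lemma eval_CC (u : Equiv.Perm (Fin n)) :
    aeval (fun j => X (u j) : Fin n → MvPolynomial (Fin n) ℂ) (CC n)
      = if u = 1 then vandermonde' n else 0 := by
  rw [CC, map_prod]
  have hfac : ∀ p : Fin n × Fin n,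
      aeval (fun j => X (u j) : Fin n → MvPolynomial (Fin n) ℂ)
        ((C (X p.1) - X p.2 : MvPolynomial (Fin n) (MvPolynomial (Fin n) ℂ)))
        = X p.1 - X (u p.2) := by
    intro p
    rw [map_sub, aeval_C, aeval_X]
    simp
  split_ifs with h
  · subst h
    simp only [hfac]
    rfl
  · obtain ⟨j, hj⟩ := exists_lt_of_ne_one h
    refine Finset.prod_eq_zero (i := (u j, j)) ?_ ?_
    · simp [hj]
    · rw [hfac]; simp

lemma degree_bound : ∀ d ∈ (CC n).support, ∀ j : Fin n, d j ≤ (j : ℕ) := by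
  intro d hd j
  have h1 : d j ≤ degreeOf j (CC n) := monomial_le_degreeOf j hd
  refine h1.trans ?_
  have h2 : degreeOf j (CC n) ≤
      ∑ p ∈ Finset.univ.filter (fun p : Fin n × Fin n => p.1 < p.2),
        degreeOf j (C (X p.1) - X (p.2) :
          MvPolynomial (Fin n) (MvPolynomial (Fin n) ℂ)) :=
    degreeOf_prod_le _ _ _
  refine h2.trans ?_
  have h3 : ∀ p : Fin n × Fin n,
      degreeOf j (C (X p.1) - X (p.2) :
        MvPolynomial (Fin n) (MvPolynomial (Fin n) ℂ)) ≤ if j = p.2 then 1 else 0 := by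
    intro p
    refine (degreeOf_sub_le _ _ _).trans ?_
    rw [degreeOf_C, degreeOf_X]
    simp
  refine (Finset.sum_le_sum fun p _ => h3 p).trans ?_
  rw [Finset.sum_boole]
  have hset : (Finset.univ.filter (fun p : Fin n × Fin n => p.1 < p.2)).filter
        (fun p => j = p.2)
      = (Finset.Iio j).image (fun i => (i, j)) := by
    ext ⟨a, b⟩
    simp only [Finset.mem_filter, Finset.mem_univ, true_and, Finset.mem_image,
      Finset.mem_Iio, Prod.mk.injEq]
    constructor
    · rintro ⟨hab, rfl⟩
      exact ⟨a, hab, rfl, rfl⟩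
    · rintro ⟨i, hi, rfl, rfl⟩
      exact ⟨hi, rfl⟩
  rw [hset, Finset.card_image_of_injective _ (fun a b hab => (Prod.mk.injEq _ _ _ _ ▸ hab).1),
    Fin.card_Iio]
  simp

noncomputable def permEquiv (n : ℕ) :
    Equiv.Perm (Fin n) ≃ (∀ j : Fin n, Fin ((j : ℕ) + 1)) :=
  Fintype.equivOfCardEq (by
    rw [Fintype.card_perm, Fintype.card_pi]
    simp only [Fintype.card_fin]
    rw [Fin.prod_univ_eq_prod_range (fun i => i + 1),
      Finset.prod_range_add_one_eq_factorial])

noncomputable def dd (t : ∀ j : Fin n, Fin ((j : ℕ) + 1)) : Fin n →₀ ℕ :=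
  Finsupp.equivFunOnFinite.symm (fun j => (t j : ℕ))

lemma dd_apply (t : ∀ j : Fin n, Fin ((j : ℕ) + 1)) (j : Fin n) : dd t j = (t j : ℕ) := rfl

lemma dd_injective : Function.Injective (dd (n := n)) := by
  intro a b hab
  funext j
  have := congrArg (fun d : Fin n →₀ ℕ => d j) hab
  simpa [dd_apply, Fin.val_injective.eq_iff] using this

lemma supp_subset_image :
    (CC n).support ⊆ Finset.univ.image (dd (n := n)) := by
  intro d hd
  rw [Finset.mem_image]
  refine ⟨fun j => ⟨d j, Nat.lt_succ_of_le (degree_bound d hd j)⟩, Finset.mem_univ _, ?_⟩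
  ext j
  rw [dd_apply]

lemma key (n : ℕ) : ∃ x y : Equiv.Perm (Fin n) → MvPolynomial (Fin n) ℂ,
    ∀ u : Equiv.Perm (Fin n),
      (∑ w : Equiv.Perm (Fin n), x w * rename (⇑u) (y w))
        = if u = 1 then vandermonde' n else 0 := by
  refine ⟨fun w => coeff (dd (permEquiv n w)) (CC n),
          fun w => monomial (dd (permEquiv n w)) (1 : ℂ), fun u => ?_⟩
  rw [← eval_CC u]
  set G : (Fin n →₀ ℕ) → MvPolynomial (Fin n) ℂ :=
    fun d => coeff d (CC n) * rename (⇑u) (monomial d (1 : ℂ)) with hG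
  have hterm : ∀ d : Fin n →₀ ℕ,
      aeval (fun j => X (u j) : Fin n → MvPolynomial (Fin n) ℂ)
        (monomial d (coeff d (CC n))) = G d := by
    intro d
    have h1 : (rename ⇑u) ((monomial d) (1:ℂ))
        = d.prod fun i k => (X (u i) : MvPolynomial (Fin n) ℂ) ^ k := by
      rw [monomial_eq, C_1, one_mul, Finsupp.prod_fintype _ _ (fun i => pow_zero _),
        map_prod, Finsupp.prod_fintype _ _ (fun i => pow_zero _)]
      exact Finset.prod_congr rfl fun i _ => by rw [map_pow, rename_X]
    rw [hG]
    simp only [h1]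
    rw [aeval_monomial]
    simp
  calc (∑ w : Equiv.Perm (Fin n), G (dd (permEquiv n w)))
      = ∑ t : (∀ j : Fin n, Fin ((j : ℕ) + 1)), G (dd t) :=
        Equiv.sum_comp (permEquiv n) (fun t => G (dd t))
    _ = ∑ d ∈ Finset.univ.image (dd (n := n)), G d :=
        (Finset.sum_image (fun a _ b _ h => dd_injective h)).symm
    _ = ∑ d ∈ (CC n).support, G d :=
        (Finset.sum_subset supp_subset_image (fun d _ hd => by
          rw [hG]
          simp only []
          rw [MvPolynomial.notMem_support_iff.mp hd, zero_mul])).symm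
    _ = aeval (fun j => X (u j) : Fin n → MvPolynomial (Fin n) ℂ) (CC n) := by
        conv_rhs => rw [(CC n).as_sum]
        rw [map_sum]
        exact (Finset.sum_congr rfl fun d _ => hterm d).symm

lemma vandermonde'_ne_zero (n : ℕ) : vandermonde' n ≠ 0 := by
  rw [vandermonde']
  rw [Finset.prod_ne_zero_iff]
  intro p hp
  rw [Finset.mem_filter] at hp
  exact sub_ne_zero.mpr (fun h => absurd (X_injective h) (ne_of_lt hp.2))

end NilHeckeAux

/-- There exist polynomials `x_w, y_w` indexed by `w ∈ Sₙ` such that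
`id = Σ_w M_{x_w} ∘ ∂_{w₀} ∘ M_{y_w}` as operators on `ℂ[x₁,…,xₙ]`, where `∂_{w₀}` is the
longest divided difference operator, characterized by `Δ · ∂_{w₀}(g) = Σ_w sgn(w)·w(g)`. -/
theorem identity_decomposition_nilHecke (n : ℕ)
    (Dw0 : MvPolynomial (Fin n) ℂ → MvPolynomial (Fin n) ℂ)
    (hDw0 : ∀ g, vandermonde' n * Dw0 g
      = ∑ w : Equiv.Perm (Fin n), ((Equiv.Perm.sign w : ℤ) : ℂ) • rename (⇑w) g) :
    ∃ x y : Equiv.Perm (Fin n) → MvPolynomial (Fin n) ℂ,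
      ∀ f : MvPolynomial (Fin n) ℂ,
        f = ∑ w : Equiv.Perm (Fin n), x w * Dw0 (y w * f) := by
  obtain ⟨x, y, hxy⟩ := NilHeckeAux.key n
  refine ⟨x, y, fun f => ?_⟩
  have hΔ := NilHeckeAux.vandermonde'_ne_zero n
  have key2 : vandermonde' n * (∑ w : Equiv.Perm (Fin n), x w * Dw0 (y w * f))
      = vandermonde' n * f := by
    calc vandermonde' n * (∑ w : Equiv.Perm (Fin n), x w * Dw0 (y w * f))
        = ∑ w : Equiv.Perm (Fin n), x w * (vandermonde' n * Dw0 (y w * f)) := by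
          rw [Finset.mul_sum]
          exact Finset.sum_congr rfl fun w _ => mul_left_comm _ _ _
      _ = ∑ w : Equiv.Perm (Fin n), ∑ u : Equiv.Perm (Fin n),
            ((Equiv.Perm.sign u : ℤ) : ℂ) •
              ((x w * rename (⇑u) (y w)) * rename (⇑u) f) := by
          refine Finset.sum_congr rfl fun w _ => ?_
          rw [hDw0, Finset.mul_sum]
          refine Finset.sum_congr rfl fun u _ => ?_
          rw [mul_smul_comm, map_mul, mul_assoc]
      _ = ∑ u : Equiv.Perm (Fin n),
            ((Equiv.Perm.sign u : ℤ) : ℂ) •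
              ((∑ w : Equiv.Perm (Fin n), x w * rename (⇑u) (y w)) * rename (⇑u) f) := by
          rw [Finset.sum_comm]
          refine Finset.sum_congr rfl fun u _ => ?_
          rw [Finset.sum_mul, Finset.smul_sum]
      _ = ((Equiv.Perm.sign (1 : Equiv.Perm (Fin n)) : ℤ) : ℂ) •
            ((vandermonde' n) * rename (⇑(1 : Equiv.Perm (Fin n))) f) := by
          rw [Finset.sum_eq_single 1]
          · rw [hxy]; simp
          · intro u _ hu
            rw [hxy, if_neg hu, zero_mul, smul_zero]
          · intro h; exact absurd (Finset.mem_univ _) h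
      _ = vandermonde' n * f := by
          simp [Equiv.Perm.coe_one]
  exact (mul_left_cancel₀ hΔ key2).symm
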